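/- Let W ⊆ (ℝ∖{0})^n be a nonempty open set such that for every x ∈ U, 1 ≤ r ≤ n, 1 ≤ u ≤ k and z ∈ W the family (α ↦ f_{rαu}(x) z^α) is absolutely summable, with the sum depending analytically on (x, z). Let y, ỹ : V → ℝ^n be analytic maps on a connected neighborhood V ⊆ U of 0, both taking values in W, both satisfying ∂y_r/∂x_u + Σ_{α∈ℤ^n} f_{rαu}(x) y(x)^α = 0 for all 1 ≤ r ≤ n, 1 ≤ u ≤ k and x ∈ V, and with y(0) = ỹ(0). Then y = ỹ on a neighborhood of 0. -/

import Mathlib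

/-- Uniqueness for the nonlinear system: if `W ⊆ (ℝ∖{0})ⁿ` is a nonempty open set on which all
the Laurent families `α ↦ f_{rαu}(x) z^α` are absolutely summable, with sums depending
analytically on `(x, z)`, and `y, ỹ` are analytic `W`-valued solutions of
`∂y_r/∂x_u + ∑_{α∈ℤⁿ} f_{rαu}(x) y(x)^α = 0` on a connected neighborhood `V ⊆ U` of `0` with
`y(0) = ỹ(0)`, then `y = ỹ` on a neighborhood of `0`. -/
theorem stmt_17 (n k : ℕ) (hn : 1 ≤ n) (hk : 1 ≤ k)
    (U : Set (Fin k → ℝ)) (hUopen : IsOpen U) (hU0 : (0 : Fin k → ℝ) ∈ U)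
    (f : Fin n → (Fin n → ℤ) → Fin k → (Fin k → ℝ) → ℝ)
    (hf : ∀ r α u, AnalyticOnNhd ℝ (f r α u) U)
    (W : Set (Fin n → ℝ)) (hWne : W.Nonempty) (hWopen : IsOpen W)
    (hW0 : ∀ z ∈ W, ∀ i, z i ≠ 0)
    (hWsum : ∀ x ∈ U, ∀ (r : Fin n) (u : Fin k), ∀ z ∈ W,
      Summable (fun α : Fin n → ℤ => |f r α u x * ∏ i, z i ^ α i|))
    (hFanalytic : ∀ (r : Fin n) (u : Fin k),
      AnalyticOnNhd ℝ
        (fun p : (Fin k → ℝ) × (Fin n → ℝ) =>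
          ∑' α : Fin n → ℤ, f r α u p.1 * ∏ i, p.2 i ^ α i)
        (U ×ˢ W))
    (V : Set (Fin k → ℝ)) (hVopen : IsOpen V) (hVconn : IsConnected V)
    (hV0 : (0 : Fin k → ℝ) ∈ V) (hVU : V ⊆ U)
    (y ytilde : (Fin k → ℝ) → Fin n → ℝ)
    (hy : AnalyticOnNhd ℝ y V) (hyt : AnalyticOnNhd ℝ ytilde V)
    (hyW : ∀ x ∈ V, y x ∈ W) (hytW : ∀ x ∈ V, ytilde x ∈ W)
    (hysys : ∀ x ∈ V, ∀ (r : Fin n) (u : Fin k),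
      fderiv ℝ (fun z => y z r) x (Pi.single u 1)
        + ∑' α : Fin n → ℤ, f r α u x * ∏ i, y x i ^ α i = 0)
    (hytsys : ∀ x ∈ V, ∀ (r : Fin n) (u : Fin k),
      fderiv ℝ (fun z => ytilde z r) x (Pi.single u 1)
        + ∑' α : Fin n → ℤ, f r α u x * ∏ i, ytilde x i ^ α i = 0)
    (h0 : y 0 = ytilde 0) :
    ∃ V' : Set (Fin k → ℝ), IsOpen V' ∧ (0 : Fin k → ℝ) ∈ V' ∧ Set.EqOn y ytilde V' := by
  classical
  set y0 : Fin n → ℝ := y 0 with hy0def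
  have hy0W : y0 ∈ W := hyW 0 hV0
  -- the nonlinearities, as maps into `ℝⁿ`
  set Φ : Fin k → ((Fin k → ℝ) × (Fin n → ℝ)) → (Fin n → ℝ) :=
    fun u p r => ∑' α : Fin n → ℤ, f r α u p.1 * ∏ i, p.2 i ^ α i with hΦdef
  have hΦa : ∀ u, AnalyticAt ℝ (Φ u) ((0 : Fin k → ℝ), y0) := by
    intro u
    exact AnalyticAt.pi (fun r => hFanalytic r u ((0 : Fin k → ℝ), y0) ⟨hU0, hy0W⟩)
  -- local Lipschitz bounds for each `Φ u`
  have hΦlip : ∀ u, ∃ K : NNReal, ∃ T ∈ nhds ((0 : Fin k → ℝ), y0), LipschitzOnWith K (Φ u) T :=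
    fun u => ((hΦa u).contDiffAt).exists_lipschitzOnWith
  choose K T hT hTlip using hΦlip
  set K0 : NNReal := Finset.univ.sup K with hK0def
  have hKK0 : ∀ u, K u ≤ K0 := fun u => Finset.le_sup (Finset.mem_univ u)
  -- find a ball inside all the `T u`
  have hTall : (⋂ u, T u) ∈ nhds ((0 : Fin k → ℝ), y0) := Filter.iInter_mem.2 hT
  obtain ⟨δ, hδpos, hδsub⟩ := Metric.mem_nhds_iff.1 hTall
  -- uniform Lipschitz bound in the second variable
  have hLip : ∀ (u : Fin k), ∀ w ∈ Metric.ball (0 : Fin k → ℝ) δ,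
      ∀ z ∈ Metric.ball y0 δ, ∀ z' ∈ Metric.ball y0 δ,
      dist (Φ u (w, z)) (Φ u (w, z')) ≤ (K0 : ℝ) * dist z z' := by
    intro u w hw z hz z' hz'
    have hmem : ∀ zz ∈ Metric.ball y0 δ, (w, zz) ∈ T u := by
      intro zz hzz
      apply Set.mem_iInter.1 (hδsub ?_) u
      rw [Metric.mem_ball, Prod.dist_eq]
      exact max_lt (Metric.mem_ball.1 hw) (Metric.mem_ball.1 hzz)
    have h1 := (hTlip u).dist_le_mul (w, z) (hmem z hz) (w, z') (hmem z' hz')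
    have h2 : dist ((w, z) : (Fin k → ℝ) × (Fin n → ℝ)) (w, z') = dist z z' := by
      rw [Prod.dist_eq, dist_self]
      exact max_eq_right dist_nonneg
    rw [h2] at h1
    refine h1.trans (mul_le_mul_of_nonneg_right ?_ dist_nonneg)
    exact_mod_cast hKK0 u
  -- choose a small ball around 0 mapped into the good region by both solutions
  have hytc : ContinuousAt ytilde 0 := (hyt 0 hV0).continuousAt
  have hyc : ContinuousAt y 0 := (hy 0 hV0).continuousAt
  have hbally : Metric.ball y0 δ ∈ nhds (y 0) := Metric.ball_mem_nhds _ hδpos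
  have hballyt : Metric.ball y0 δ ∈ nhds (ytilde 0) := by
    rw [← h0]; exact Metric.ball_mem_nhds _ hδpos
  have hS : (V ∩ Metric.ball 0 δ ∩ y ⁻¹' Metric.ball y0 δ ∩ ytilde ⁻¹' Metric.ball y0 δ)
      ∈ nhds (0 : Fin k → ℝ) :=
    Filter.inter_mem
      (Filter.inter_mem
        (Filter.inter_mem (hVopen.mem_nhds hV0) (Metric.ball_mem_nhds _ hδpos))
        (hyc.preimage_mem_nhds hbally))
      (hytc.preimage_mem_nhds hballyt)
  obtain ⟨ε, hεpos, hεsub⟩ := Metric.mem_nhds_iff.1 hS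
  refine ⟨Metric.ball 0 (ε / 2), Metric.isOpen_ball, Metric.mem_ball_self (by linarith), ?_⟩
  intro x hx
  have hxn : ‖x‖ < ε / 2 := by rwa [← mem_ball_zero_iff]
  -- facts about points `t • x`
  have hmemε : ∀ t : ℝ, |t| ≤ 2 → t • x ∈ Metric.ball (0 : Fin k → ℝ) ε := by
    intro t ht
    rw [mem_ball_zero_iff, norm_smul, Real.norm_eq_abs]
    have h1 : |t| * ‖x‖ ≤ 2 * ‖x‖ := mul_le_mul_of_nonneg_right ht (norm_nonneg x)
    linarith
  have hεfacts : ∀ w ∈ Metric.ball (0 : Fin k → ℝ) ε,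
      w ∈ V ∧ w ∈ Metric.ball (0 : Fin k → ℝ) δ ∧ y w ∈ Metric.ball y0 δ ∧
        ytilde w ∈ Metric.ball y0 δ := by
    intro w hw
    have h := hεsub hw
    exact ⟨h.1.1.1, h.1.1.2, h.1.2, h.2⟩
  -- the clamped time
  set τ : ℝ → ℝ := fun t => max (-2) (min t 2) with hτdef
  have hτabs : ∀ t, |τ t| ≤ 2 := by
    intro t
    rw [abs_le]
    constructor
    · exact le_max_left _ _
    · exact max_le (by norm_num) (min_le_right _ _)
  have hτeq : ∀ t ∈ Set.Ioo (-2 : ℝ) 2, τ t = t := by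
    intro t ht
    have h1 : min t 2 = t := min_eq_left ht.2.le
    simp only [hτdef, h1]
    exact max_eq_right ht.1.le
  -- the vector field
  set v : ℝ → (Fin n → ℝ) → (Fin n → ℝ) :=
    fun t z => -∑ u, x u • Φ u (τ t • x, z) with hvdef
  set C : NNReal := (∑ u, ‖x u‖₊) * K0 with hCdef
  have hv : ∀ t, LipschitzOnWith C (v t) (Metric.ball y0 δ) := by
    intro t
    apply LipschitzOnWith.of_dist_le_mul
    intro z hz z' hz'
    have hwδ : τ t • x ∈ Metric.ball (0 : Fin k → ℝ) δ :=
      (hεfacts _ (hmemε _ (hτabs t))).2.1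
    have hC : (C : ℝ) = (∑ u, |x u|) * (K0 : ℝ) := by
      push_cast [hCdef]
      simp [Real.norm_eq_abs]
    calc dist (v t z) (v t z')
        = dist (∑ u, x u • Φ u (τ t • x, z)) (∑ u, x u • Φ u (τ t • x, z')) := dist_neg_neg _ _
      _ ≤ ∑ u, dist (x u • Φ u (τ t • x, z)) (x u • Φ u (τ t • x, z')) :=
          dist_sum_sum_le _ _ _
      _ ≤ ∑ u : Fin k, |x u| * ((K0 : ℝ) * dist z z') := by
          apply Finset.sum_le_sum
          intro u _
          rw [dist_smul₀, Real.norm_eq_abs]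
          exact mul_le_mul_of_nonneg_left (hLip u _ hwδ z hz z' hz') (abs_nonneg _)
      _ = (C : ℝ) * dist z z' := by
          rw [← Finset.sum_mul, hC, mul_assoc]
  -- the key derivative computation, for an arbitrary solution
  have key : ∀ Y : (Fin k → ℝ) → Fin n → ℝ, AnalyticOnNhd ℝ Y V →
      (∀ x' ∈ V, ∀ (r : Fin n) (u : Fin k),
        fderiv ℝ (fun z => Y z r) x' (Pi.single u 1)
          + ∑' α : Fin n → ℤ, f r α u x' * ∏ i, Y x' i ^ α i = 0) →
      (∀ w ∈ Metric.ball (0 : Fin k → ℝ) ε, Y w ∈ Metric.ball y0 δ) →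
      ∀ t ∈ Set.Ioo (-2 : ℝ) 2,
        HasDerivAt (fun s : ℝ => Y (s • x)) (v t (Y (t • x))) t ∧
          Y (t • x) ∈ Metric.ball y0 δ := by
    intro Y hY hsys hYball t ht
    have htabs : |t| ≤ 2 := by
      rw [abs_le]; exact ⟨ht.1.le, ht.2.le⟩
    have hq : t • x ∈ Metric.ball (0 : Fin k → ℝ) ε := hmemε t htabs
    have hqV : t • x ∈ V := (hεfacts _ hq).1
    refine ⟨?_, hYball _ hq⟩
    have hd : DifferentiableAt ℝ Y (t • x) := (hY _ hqV).differentiableAt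
    have hline : HasDerivAt (fun s : ℝ => s • x) x t := by
      simpa using (hasDerivAt_id t).smul_const x
    have hcomp : HasDerivAt (fun s : ℝ => Y (s • x)) (fderiv ℝ Y (t • x) x) t :=
      hd.hasFDerivAt.comp_hasDerivAt t hline
    have hgoal : fderiv ℝ Y (t • x) x = v t (Y (t • x)) := by
      have hproj : ∀ (r : Fin n) (u : Fin k),
          fderiv ℝ Y (t • x) (Pi.single u 1) r = -(Φ u (t • x, Y (t • x)) r) := by
        intro r u
        have hc : fderiv ℝ (fun z => Y z r) (t • x)
            = (ContinuousLinearMap.proj r : (Fin n → ℝ) →L[ℝ] ℝ).comp (fderiv ℝ Y (t • x)) :=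
          ((ContinuousLinearMap.proj r : (Fin n → ℝ) →L[ℝ] ℝ).hasFDerivAt.comp
            (t • x) hd.hasFDerivAt).fderiv
        have hs := hsys (t • x) hqV r u
        rw [hc] at hs
        simp only [ContinuousLinearMap.comp_apply, ContinuousLinearMap.proj_apply] at hs
        have : fderiv ℝ Y (t • x) (Pi.single u 1) r
            = -(∑' α : Fin n → ℤ, f r α u (t • x) * ∏ i, Y (t • x) i ^ α i) := by
          linarith
        rw [this]
      funext r
      have hxsum : x = ∑ u, x u • (Pi.single u (1 : ℝ) : Fin k → ℝ) := by
        conv_lhs => rw [← Finset.univ_sum_single x]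
        congr 1
        funext u
        rw [← Pi.single_smul, smul_eq_mul, mul_one]
      have hrhs : v t (Y (t • x)) r = -∑ u, x u * Φ u (t • x, Y (t • x)) r := by
        simp only [hvdef, hτeq t ht, Pi.neg_apply, Finset.sum_apply, Pi.smul_apply,
          smul_eq_mul]
      rw [hrhs]
      set D := fderiv ℝ Y (t • x) with hDdef
      conv_lhs => rw [hxsum]
      rw [map_sum]
      simp only [map_smul, Finset.sum_apply, Pi.smul_apply, smul_eq_mul]
      rw [← Finset.sum_neg_distrib]
      apply Finset.sum_congr rfl
      intro u _
      rw [hproj r u]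
      ring
    rw [← hgoal]
    exact hcomp
  -- apply ODE uniqueness
  have heq0 : y ((0 : ℝ) • x) = ytilde ((0 : ℝ) • x) := by
    rw [zero_smul]; exact h0
  have hyball : ∀ w ∈ Metric.ball (0 : Fin k → ℝ) ε, y w ∈ Metric.ball y0 δ :=
    fun w hw => (hεfacts w hw).2.2.1
  have hytball : ∀ w ∈ Metric.ball (0 : Fin k → ℝ) ε, ytilde w ∈ Metric.ball y0 δ :=
    fun w hw => (hεfacts w hw).2.2.2
  have hEq := ODE_solution_unique_of_mem_Ioo (fun t _ => hv t)
    (show (0 : ℝ) ∈ Set.Ioo (-2 : ℝ) 2 by norm_num)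
    (key y hy hysys hyball) (key ytilde hyt hytsys hytball) heq0
  have h1 := hEq (show (1 : ℝ) ∈ Set.Ioo (-2 : ℝ) 2 by norm_num)
  simpa using h1
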